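/- Let P be the uniform distribution on the region R bounded by the rhombus with vertices O(0,0), A(1,0), B(1+1/√2, 1/√2), C(1/√2, 1/√2). The set α = { ((1/3)(1 + 1/√2), 1/(3√2)), ((1/3)(√2 + 2), √2/3) } satisfies: ∫ min_{a∈α} ‖x − a‖² dP(x) = (2√2 − 1)/(18√2) ≈ 0.0718274, and the Voronoi boundary of the two points is the diagonal AC of the rhombus. -/

import Mathlib

private lemma integ_quad (a b c d : ℝ) :
    ∫ x in a..b, ((x - c) ^ 2 + d) = ((b - c) ^ 3 - (a - c) ^ 3) / 3 + d * (b - a) := by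
  have h : ∀ x ∈ Set.uIcc a b, HasDerivAt (fun t => (t - c) ^ 3 / 3 + d * t)
      ((x - c) ^ 2 + d) x := by
    intro x _
    have h1 : HasDerivAt (fun t : ℝ => (t - c) ^ 3 / 3) ((x - c) ^ 2) x := by
      have := (((hasDerivAt_id x).sub_const c).pow 3).div_const 3
      simp only [id_eq] at this
      refine this.congr_deriv ?_
      ring
    have h2 : HasDerivAt (fun t : ℝ => d * t) d x := by
      simpa using (hasDerivAt_id x).const_mul d
    exact h1.add h2
  rw [intervalIntegral.integral_eq_sub_of_hasDerivAt h
    (by apply Continuous.intervalIntegrable; continuity)]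
  ring

private lemma integ_poly (c0 c1 c2 b : ℝ) :
    ∫ y in (0:ℝ)..b, (c0 + c1 * y + c2 * y ^ 2)
      = c0 * b + c1 * b ^ 2 / 2 + c2 * b ^ 3 / 3 := by
  have h : ∀ x ∈ Set.uIcc (0:ℝ) b, HasDerivAt
      (fun t => c0 * t + c1 * t ^ 2 / 2 + c2 * t ^ 3 / 3)
      (c0 + c1 * x + c2 * x ^ 2) x := by
    intro x _
    have h1 : HasDerivAt (fun t : ℝ => c0 * t) c0 x := by
      simpa using (hasDerivAt_id x).const_mul c0
    have h2 : HasDerivAt (fun t : ℝ => c1 * t ^ 2 / 2) (c1 * x) x := by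
      have := (((hasDerivAt_id x).pow 2).const_mul c1).div_const 2
      simp only [id_eq] at this
      refine this.congr_deriv ?_
      ring
    have h3 : HasDerivAt (fun t : ℝ => c2 * t ^ 3 / 3) (c2 * x ^ 2) x := by
      have := (((hasDerivAt_id x).pow 3).const_mul c2).div_const 3
      simp only [id_eq] at this
      refine this.congr_deriv ?_
      ring
    exact (h1.add h2).add h3
  rw [intervalIntegral.integral_eq_sub_of_hasDerivAt h
    (by apply Continuous.intervalIntegrable; continuity)]
  ring

/-- For the uniform distribution (density √2) on the rhombus with vertices
O(0,0), A(1,0), B(1+1/√2, 1/√2), C(1/√2, 1/√2), the two-point set consisting of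
p = ((1/3)(1+1/√2), 1/(3√2)) and q = ((1/3)(√2+2), √2/3) has distortion error
(2√2−1)/(18√2), and the Voronoi boundary of p and q is the diagonal AC of the
rhombus, i.e. the line x₂ = −(√2+1)(x₁−1). -/
theorem rhombus_two_means (p q : ℝ × ℝ)
    (hp : p = ((1 / 3) * (1 + 1 / Real.sqrt 2), 1 / (3 * Real.sqrt 2)))
    (hq : q = ((1 / 3) * (Real.sqrt 2 + 2), Real.sqrt 2 / 3)) :
    Real.sqrt 2 * (∫ y in (0:ℝ)..(1 / Real.sqrt 2), ∫ x in y..(y + 1),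
        min ((x - p.1) ^ 2 + (y - p.2) ^ 2) ((x - q.1) ^ 2 + (y - q.2) ^ 2))
      = (2 * Real.sqrt 2 - 1) / (18 * Real.sqrt 2) ∧
    (∀ v : ℝ × ℝ, (v.1 - p.1) ^ 2 + (v.2 - p.2) ^ 2
        = (v.1 - q.1) ^ 2 + (v.2 - q.2) ^ 2 ↔
          v.2 = -(Real.sqrt 2 + 1) * (v.1 - 1)) := by
  have hs0 : (0:ℝ) < Real.sqrt 2 := Real.sqrt_pos.mpr (by norm_num)
  set s := Real.sqrt 2 with hsdef
  have hs2 : s ^ 2 = 2 := Real.sq_sqrt (by norm_num)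
  have hs1 : 1 < s := by nlinarith
  have hp1 : p.1 = (2 + s) / 6 := by
    rw [hp]; show (1/3) * (1 + 1/s) = (2 + s) / 6
    field_simp
    linear_combination -3 * hs2
  have hp2 : p.2 = s / 6 := by
    rw [hp]; show 1 / (3 * s) = s / 6
    rw [div_eq_div_iff (by positivity) (by norm_num)]
    linear_combination -3 * hs2
  have hq1 : q.1 = (s + 2) / 3 := by rw [hq]; show (1/3) * (s + 2) = (s + 2)/3; ring
  have hq2 : q.2 = s / 3 := by rw [hq]
  constructor
  · -- the distortion error computation
    have key : ∀ y ∈ Set.uIcc (0:ℝ) (1/s),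
        (∫ x in y..(y+1), min ((x - p.1) ^ 2 + (y - p.2) ^ 2)
            ((x - q.1) ^ 2 + (y - q.2) ^ 2))
          = (2/9 - s/18) + (1/3 - 2*s/3) * y + (4/3 - s/3) * y ^ 2 := by
      intro y hy
      rw [Set.uIcc_of_le (by positivity)] at hy
      obtain ⟨hy0, hy1⟩ := hy
      rw [hp1, hp2, hq1, hq2]
      set x0 : ℝ := 1 - (s - 1) * y with hx0
      have hsy : s * y ≤ 1 := by
        have := mul_le_mul_of_nonneg_left hy1 hs0.le
        rwa [mul_one_div, div_self hs0.ne'] at this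
      have hyx0 : y ≤ x0 := by rw [hx0]; nlinarith
      have hx01 : x0 ≤ y + 1 := by rw [hx0]; nlinarith
      have hcont : Continuous (fun x : ℝ => min ((x - (2+s)/6) ^ 2 + (y - s/6) ^ 2)
          ((x - (s+2)/3) ^ 2 + (y - s/3) ^ 2)) := by
        apply Continuous.min <;> continuity
      rw [← intervalIntegral.integral_add_adjacent_intervals (a := y) (b := x0) (c := y + 1)
        (hcont.intervalIntegrable _ _) (hcont.intervalIntegrable _ _)]
      have hba : ∀ x : ℝ, ((x - (s+2)/3) ^ 2 + (y - s/3) ^ 2)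
          - ((x - (2+s)/6) ^ 2 + (y - s/6) ^ 2) = s * (s + 1) / 3 * (x0 - x) := by
        intro x
        rw [hx0]
        linear_combination (-1/6 + x/3 + s*y/3) * hs2
      have e1 : (∫ x in y..x0, min ((x - (2+s)/6) ^ 2 + (y - s/6) ^ 2)
            ((x - (s+2)/3) ^ 2 + (y - s/3) ^ 2))
          = ∫ x in y..x0, ((x - (2+s)/6) ^ 2 + (y - s/6) ^ 2) := by
        apply intervalIntegral.integral_congr
        intro x hx
        rw [Set.uIcc_of_le hyx0] at hx
        have hxle : x ≤ x0 := hx.2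
        apply min_eq_left
        have hnn : 0 ≤ s * (s + 1) / 3 * (x0 - x) := by
          apply mul_nonneg
          · positivity
          · linarith
        linarith [hba x]
      have e2 : (∫ x in x0..(y+1), min ((x - (2+s)/6) ^ 2 + (y - s/6) ^ 2)
            ((x - (s+2)/3) ^ 2 + (y - s/3) ^ 2))
          = ∫ x in x0..(y+1), ((x - (s+2)/3) ^ 2 + (y - s/3) ^ 2) := by
        apply intervalIntegral.integral_congr
        intro x hx
        rw [Set.uIcc_of_le hx01] at hx
        have hxge : x0 ≤ x := hx.1
        apply min_eq_right
        have hnn : s * (s + 1) / 3 * (x0 - x) ≤ 0 := by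
          apply mul_nonpos_of_nonneg_of_nonpos
          · positivity
          · linarith
        linarith [hba x]
      rw [e1, e2, integ_quad, integ_quad, hx0]
      linear_combination (1/18 - y^2/3 + s*y/6 + s*y^2/6) * hs2
    rw [intervalIntegral.integral_congr key, integ_poly]
    have hb : (1:ℝ)/s = s/2 := by
      rw [div_eq_div_iff hs0.ne' (by norm_num)]
      linear_combination -hs2
    rw [hb, eq_div_iff (by positivity)]
    linear_combination (-1/2 + s - s^2/4 - s^3/2 - s^4/4) * hs2
  · -- the Voronoi boundary
    intro v
    rw [hp1, hp2, hq1, hq2]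
    constructor
    · intro h
      have hh : s * (v.2 + (s + 1) * (v.1 - 1)) = 0 := by
        linear_combination 3 * h + (v.1 - 1/2) * hs2
      have := (mul_eq_zero.mp hh).resolve_left hs0.ne'
      linarith
    · intro h
      linear_combination (s/3) * h + (1/6 - v.1/3) * hs2
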